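/- Let X be an S-open subset of a product ∏_{t∈T} X_t of topological spaces, let T' be a topology on X such that (X,T') is locally projectively symmetric, let (Y,d) be a metric space, and let f : (X,T') → Y be strongly separately continuous at the point a = (a_t)_{t∈T} ∈ X. Then f is continuous at a (with respect to T') if and only if for every ε > 0 there exist a finite set T_0 ⊆ T and a T'-neighborhood U of a such that d(f(a), f(x_{T_0}^a)) < ε for all x ∈ U, where x_{T_0}^a denotes the point whose t-th coordinate is a_t for t ∈ T_0 and x_t for t ∉ T_0. -/

import Mathlib

open Function Filter Topology

/-- `Sigma1 x` (σ₁(x)): the set of points differing from `x` in at most one coordinate. -/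
def Sigma1 {T : Type*} {X : T → Type*} (x : ∀ t, X t) : Set (∀ t, X t) :=
  {y | {t | y t ≠ x t}.Subsingleton}

/-- A set `A` is `S`-open if `σ₁(x) ⊆ A` for every `x ∈ A`. -/
def SOpen {T : Type*} {X : T → Type*} (A : Set (∀ t, X t)) : Prop :=
  ∀ x ∈ A, Sigma1 x ⊆ A

theorem update_mem {T : Type*} [DecidableEq T] {X : T → Type*} {A : Set (∀ t, X t)}
    (hA : SOpen A) {x : ∀ t, X t} (hx : x ∈ A) (t : T) (v : X t) :
    Function.update x t v ∈ A := by
  apply hA x hx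
  intro s hs s' hs'
  simp only [Set.mem_setOf_eq] at hs hs'
  have h1 : s = t := by
    by_contra h
    exact hs (Function.update_of_ne h v x)
  have h2 : s' = t := by
    by_contra h
    exact hs' (Function.update_of_ne h v x)
  rw [h1, h2]

/-- The point `x_t^v`: `x` with its `t`-th coordinate replaced by `v`, as an element
of the `S`-open set `A`. -/
def updPt {T : Type*} [DecidableEq T] {X : T → Type*} {A : Set (∀ t, X t)}
    (hA : SOpen A) (x : ↥A) (t : T) (v : X t) : ↥A :=
  ⟨Function.update x.1 t v, update_mem hA x.2 t v⟩

/-- `f : (A, T') → Y` is strongly separately continuous at `a` (w.r.t. every variable):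
for each `t`, `lim_{x → a} dist (f x) (f (x_t^a)) = 0`, the limit taken in `T'`. -/
def StrSepContAt {T : Type*} [DecidableEq T] {X : T → Type*} {A : Set (∀ t, X t)}
    (hA : SOpen A) (T' : TopologicalSpace ↥A) {Y : Type*} [MetricSpace Y]
    (f : ↥A → Y) (a : ↥A) : Prop :=
  ∀ t : T, Filter.Tendsto (fun x : ↥A => dist (f x) (f (updPt hA x t (a.1 t))))
    (@nhds _ T' a) (nhds 0)

/-- `B ⊆ A` is projectively symmetric with respect to `a`: `x_t^a ∈ B` for all `x ∈ B`, `t`. -/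
def ProjSym {T : Type*} [DecidableEq T] {X : T → Type*} {A : Set (∀ t, X t)}
    (hA : SOpen A) (B : Set ↥A) (a : ↥A) : Prop :=
  ∀ x ∈ B, ∀ t : T, updPt hA x t (a.1 t) ∈ B

/-- A topology `T'` on `A` is locally projectively symmetric: every point has a
neighborhood base of sets projectively symmetric with respect to it. -/
def LocProjSym {T : Type*} [DecidableEq T] {X : T → Type*} {A : Set (∀ t, X t)}
    (hA : SOpen A) (T' : TopologicalSpace ↥A) : Prop :=
  ∀ x : ↥A, ∀ U ∈ @nhds _ T' x, ∃ V ∈ @nhds _ T' x, V ⊆ U ∧ ProjSym hA V x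

/-- The point `x_{T0}^a`: coordinates in `T0` taken from `a`, the rest from `x`. -/
def updFin {T : Type*} [DecidableEq T] {X : T → Type*} (x a : ∀ t, X t)
    (T0 : Finset T) : ∀ t, X t :=
  fun s => if s ∈ T0 then a s else x s

theorem updFin_mem {T : Type*} [DecidableEq T] {X : T → Type*} {A : Set (∀ t, X t)}
    (hA : SOpen A) {x : ∀ t, X t} (hx : x ∈ A) (a : ∀ t, X t) (T0 : Finset T) :
    updFin x a T0 ∈ A := by
  induction T0 using Finset.induction_on with
  | empty =>
      have h : updFin x a ∅ = x := by
        funext s; simp [updFin]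
      rwa [h]
  | @insert t T0 ht ih =>
      have h : updFin x a (insert t T0) = Function.update (updFin x a T0) t (a t) := by
        funext s
        by_cases hs : s = t
        · subst hs; simp [updFin]
        · simp [updFin, Function.update_of_ne hs, hs]
      rw [h]
      exact update_mem hA ih t (a t)

/-- Criterion for continuity of a strongly separately continuous map at a point of a
locally projectively symmetric space. -/
theorem continuousAt_iff_finite_approx {T : Type*} [DecidableEq T] {X : T → Type*}
    [∀ t, TopologicalSpace (X t)] {A : Set (∀ t, X t)} (hA : SOpen A)
    (T' : TopologicalSpace ↥A) (hsym : LocProjSym hA T') {Y : Type*} [MetricSpace Y]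
    (f : ↥A → Y) (a : ↥A) (hf : StrSepContAt hA T' f a) :
    @ContinuousAt _ _ T' _ f a ↔
      ∀ ε > (0 : ℝ), ∃ T0 : Finset T, ∃ U ∈ @nhds _ T' a, ∀ x ∈ U,
        dist (f a) (f ⟨updFin (x : ↥A).1 a.1 T0, updFin_mem hA (x : ↥A).2 a.1 T0⟩) < ε := by
  letI := T'
  constructor
  · intro hc ε hε
    refine ⟨∅, _, hc (Metric.ball_mem_nhds (f a) hε), ?_⟩
    intro x hx
    have hx' : (⟨updFin (x : ↥A).1 a.1 ∅, updFin_mem hA (x : ↥A).2 a.1 ∅⟩ : ↥A) = x :=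
      Subtype.ext (funext fun s => by simp [updFin])
    rw [hx', dist_comm]
    exact hx
  · intro h
    rw [ContinuousAt, Metric.tendsto_nhds]
    intro ε hε
    obtain ⟨T0, U, hU, hUd⟩ := h (ε / 2) (by positivity)
    set n := T0.card with hn
    set δ := ε / (2 * (n + 1)) with hδdef
    have hδ : 0 < δ := by positivity
    have hW : ∀ᶠ x : ↥A in nhds a, ∀ t ∈ T0,
        dist (f x) (f (updPt hA x t (a.1 t))) < δ := by
      rw [Filter.eventually_all_finset]
      intro t _
      exact (hf t).eventually (Iio_mem_nhds hδ)
    obtain ⟨V, hV, hVU, hVsym⟩ := hsym a _ (Filter.inter_mem hU hW)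
    have key : ∀ S : Finset T, S ⊆ T0 → ∀ x ∈ V,
        (⟨updFin x.1 a.1 S, updFin_mem hA x.2 a.1 S⟩ : ↥A) ∈ V ∧
        dist (f x) (f ⟨updFin x.1 a.1 S, updFin_mem hA x.2 a.1 S⟩) ≤ S.card * δ := by
      intro S
      induction S using Finset.induction_on with
      | empty =>
        intro _ x hx
        have hx' : (⟨updFin x.1 a.1 ∅, updFin_mem hA x.2 a.1 ∅⟩ : ↥A) = x :=
          Subtype.ext (funext fun s => by simp [updFin])
        rw [hx']
        simp [hx]
      | @insert t S ht ih =>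
        intro hsub x hx
        have hS : S ⊆ T0 := (Finset.subset_insert t S).trans hsub
        obtain ⟨hmem, hdist⟩ := ih hS x hx
        set y : ↥A := (⟨updFin x.1 a.1 S, updFin_mem hA x.2 a.1 S⟩ : ↥A) with hy_def
        have hy : (⟨updFin x.1 a.1 (insert t S), updFin_mem hA x.2 a.1 (insert t S)⟩ : ↥A)
            = updPt hA y t (a.1 t) := by
          apply Subtype.ext
          funext s
          by_cases hs : s = t
          · subst hs; simp [updFin, updPt]
          · simp [updFin, updPt, Function.update_of_ne hs, hs, hy_def]
        rw [hy]
        refine ⟨hVsym y hmem t, ?_⟩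
        have h1 : dist (f y) (f (updPt hA y t (a.1 t))) < δ :=
          (hVU hmem).2 t (hsub (Finset.mem_insert_self t S))
        calc dist (f x) (f (updPt hA y t (a.1 t)))
            ≤ dist (f x) (f y) + dist (f y) (f (updPt hA y t (a.1 t))) := dist_triangle _ _ _
          _ ≤ S.card * δ + δ := add_le_add hdist h1.le
          _ = (insert t S).card * δ := by
              rw [Finset.card_insert_of_notMem ht]
              push_cast
              ring
    filter_upwards [hV] with x hx
    obtain ⟨hmem, hdist⟩ := key T0 (Finset.Subset.refl T0) x hx
    have h1 : dist (f a) (f ⟨updFin x.1 a.1 T0, updFin_mem hA x.2 a.1 T0⟩) < ε / 2 :=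
      hUd x (hVU hx).1
    have h2 : (n : ℝ) * δ < ε / 2 := by
      show (n : ℝ) * (ε / (2 * ((n : ℝ) + 1))) < ε / 2
      rw [mul_div_assoc', div_lt_div_iff₀ (by positivity) (by norm_num)]
      nlinarith [Nat.cast_nonneg (α := ℝ) n]
    calc dist (f x) (f a)
        ≤ dist (f x) (f ⟨updFin x.1 a.1 T0, updFin_mem hA x.2 a.1 T0⟩)
          + dist (f ⟨updFin x.1 a.1 T0, updFin_mem hA x.2 a.1 T0⟩) (f a) := dist_triangle _ _ _
      _ < ε / 2 + ε / 2 := by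
          rw [dist_comm (f ⟨updFin x.1 a.1 T0, updFin_mem hA x.2 a.1 T0⟩)]
          exact add_lt_add_of_le_of_lt (hdist.trans h2.le) h1
      _ = ε := by ring
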